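/- A bounded-degree connected infinite graph containing a distinguished vertex o and an infinite sequence of distinct vertices v_1, v_2, … with effective resistance R(o, v_i) ≤ C for all i is transient. -/

import Mathlib

open Finset

theorem stmt_12 {V : Type*} (G : SimpleGraph V) [DecidableRel G.Adj]
    [∀ v : V, Fintype (G.neighborSet v)]
    (hconn : G.Connected) (D : ℕ) (hdeg : ∀ v : V, G.degree v ≤ D)
    (o : V) (v : ℕ → V) (hinj : Function.Injective v) (C : ℝ)
    -- for every `i` there is a unit flow from `o` to `v i` of energy at most `C`,
    -- i.e. the effective resistance `R(o, v i)` is at most `C`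
    (hres : ∀ i : ℕ, ∃ θ : V → V → ℝ,
      (∀ a b : V, θ a b = -θ b a) ∧
      (∀ a b : V, ¬ G.Adj a b → θ a b = 0) ∧
      (∀ w : V, w ≠ o → w ≠ v i → ∑ u ∈ G.neighborFinset w, θ w u = 0) ∧
      (∑ u ∈ G.neighborFinset o, θ o u = 1) ∧
      Summable (fun p : V × V => (θ p.1 p.2) ^ 2) ∧
      ∑' p : V × V, (θ p.1 p.2) ^ 2 ≤ C) :
    -- transience: there is a finite-energy unit flow from `o` to infinity
    ∃ θ : V → V → ℝ,
      (∀ a b : V, θ a b = -θ b a) ∧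
      (∀ a b : V, ¬ G.Adj a b → θ a b = 0) ∧
      (∀ w : V, w ≠ o → ∑ u ∈ G.neighborFinset w, θ w u = 0) ∧
      (∑ u ∈ G.neighborFinset o, θ o u = 1) ∧
      Summable (fun p : V × V => (θ p.1 p.2) ^ 2) := by
  classical
  choose Θ h1 h2 h3 h4 h5 h6 using hres
  have hC : 0 ≤ C := le_trans (tsum_nonneg (fun p => sq_nonneg _)) (h6 0)
  set u : Ultrafilter ℕ := Filter.hyperfilter ℕ with hu
  -- each Θ i a b is bounded
  have hbd : ∀ (i : ℕ) (a b : V), Θ i a b ∈ Set.Icc (-(Real.sqrt C)) (Real.sqrt C) := by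
    intro i a b
    have h1' : Θ i a b ^ 2 ≤ ∑' p : V × V, (Θ i p.1 p.2) ^ 2 := by
      have := (h5 i).le_tsum (a, b) (fun p _ => sq_nonneg _)
      simpa using this
    have h2' : Θ i a b ^ 2 ≤ C := h1'.trans (h6 i)
    have hs := Real.sq_sqrt hC
    have hs0 := Real.sqrt_nonneg C
    constructor
    · nlinarith [sq_nonneg (Θ i a b + Real.sqrt C)]
    · nlinarith [sq_nonneg (Θ i a b - Real.sqrt C)]
  -- take the ultrafilter limit
  have key : ∀ a b : V, ∃ L : ℝ, Filter.Tendsto (fun i => Θ i a b) u (nhds L) := by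
    intro a b
    have hK : IsCompact (Set.Icc (-(Real.sqrt C)) (Real.sqrt C)) := isCompact_Icc
    have hmem : ↑(u.map (fun i => Θ i a b)) ≤ Filter.principal (Set.Icc (-(Real.sqrt C)) (Real.sqrt C)) := by
      rw [Ultrafilter.coe_map, Filter.le_principal_iff, Filter.mem_map]
      exact Filter.univ_mem' (fun i => hbd i a b)
    obtain ⟨L, _, hL⟩ := hK.ultrafilter_le_nhds (u.map (fun i => Θ i a b)) hmem
    exact ⟨L, by rwa [Ultrafilter.coe_map] at hL⟩
  choose θ hθ using key
  have hNB : (u : Filter ℕ).NeBot := Ultrafilter.neBot u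
  refine ⟨θ, ?_, ?_, ?_, ?_, ?_⟩
  · -- antisymmetry
    intro a b
    have t1 := hθ a b
    have t2 : Filter.Tendsto (fun i => Θ i a b) u (nhds (-θ b a)) := by
      have := (hθ b a).neg
      refine this.congr (fun i => (h1 i a b).symm)
    exact tendsto_nhds_unique t1 t2
  · -- supported on edges
    intro a b hab
    have t2 : Filter.Tendsto (fun i => Θ i a b) u (nhds 0) := by
      have : (fun i => Θ i a b) = fun _ => (0 : ℝ) := funext fun i => h2 i a b hab
      rw [this]; exact tendsto_const_nhds
    exact tendsto_nhds_unique (hθ a b) t2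
  · -- node law away from o
    intro w hw
    have t1 : Filter.Tendsto (fun i => ∑ x ∈ G.neighborFinset w, Θ i w x) u
        (nhds (∑ x ∈ G.neighborFinset w, θ w x)) :=
      tendsto_finset_sum _ (fun x _ => hθ w x)
    have hcof : {i : ℕ | v i ≠ w} ∈ (u : Filter ℕ) := by
      apply Filter.hyperfilter_le_cofinite
      rw [Filter.mem_cofinite]
      have : {i : ℕ | v i ≠ w}ᶜ = v ⁻¹' {w} := by
        ext i; simp [Set.mem_preimage]
      rw [this]
      exact Set.Finite.preimage hinj.injOn (Set.finite_singleton w)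
    have t2 : Filter.Tendsto (fun i => ∑ x ∈ G.neighborFinset w, Θ i w x) u
        (nhds 0) := by
      refine Filter.Tendsto.congr' ?_ tendsto_const_nhds
      filter_upwards [hcof] with i hi
      exact (h3 i w hw (Ne.symm hi)).symm
    exact tendsto_nhds_unique t1 t2
  · -- unit outflow at o
    have t1 : Filter.Tendsto (fun i => ∑ x ∈ G.neighborFinset o, Θ i o x) u
        (nhds (∑ x ∈ G.neighborFinset o, θ o x)) :=
      tendsto_finset_sum _ (fun x _ => hθ o x)
    have t2 : Filter.Tendsto (fun i => ∑ x ∈ G.neighborFinset o, Θ i o x) u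
        (nhds 1) := by
      have : (fun i => ∑ x ∈ G.neighborFinset o, Θ i o x) = fun _ => (1 : ℝ) :=
        funext fun i => h4 i
      rw [this]; exact tendsto_const_nhds
    exact tendsto_nhds_unique t1 t2
  · -- finite energy
    refine summable_of_sum_le (c := C) (fun p => sq_nonneg _) ?_
    intro F
    have t1 : Filter.Tendsto (fun i => ∑ p ∈ F, (Θ i p.1 p.2) ^ 2) u
        (nhds (∑ p ∈ F, (θ p.1 p.2) ^ 2)) :=
      tendsto_finset_sum _ (fun p _ => (hθ p.1 p.2).pow 2)
    refine le_of_tendsto t1 ?_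
    refine Filter.Eventually.of_forall (fun i => ?_)
    calc ∑ p ∈ F, (Θ i p.1 p.2) ^ 2
        ≤ ∑' p : V × V, (Θ i p.1 p.2) ^ 2 :=
          (h5 i).sum_le_tsum F (fun p _ => sq_nonneg _)
      _ ≤ C := h6 i
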